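/- Let φ₁, …, φ_k be formulas with pairwise disjoint variable sets X₁, …, X_k, all contained in X, and let a : X₀ → {0,1} with X₀ ⊆ X and aᵢ = a|_{Xᵢ}. Then S_X(⋁_{j=1}^k φ_j, a) = 2^{|X \ (X₀ ∪ X₁ ∪ … ∪ X_k)|} · Σ_{i=1}^k S_{Xᵢ}(φᵢ,aᵢ) · Π_{j=1}^{i−1} (2^{|X_j \ X₀|} − S_{X_j}(φ_j,a_j)) · Π_{j=i+1}^{k} 2^{|X_j \ X₀|}. -/

import Mathlib

variable {V : Type} [DecidableEq V] [Fintype V]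

/-- A (Boolean) formula/relational constraint: a set of variables together with a
satisfaction predicate that only depends on those variables. -/
structure Fmla (V : Type) [DecidableEq V] where
  vars : Finset V
  sat : (V → Bool) → Prop
  localOnly : ∀ b b' : V → Bool, (∀ x ∈ vars, b x = b' x) → (sat b ↔ sat b')

open Classical in
/-- `Sol X X₀ a φ` is the set of assignments `b` on `X` (encoded as total Boolean
functions that are `false` outside `X`) satisfying `φ` and consistent with the
partial assignment `a` whose domain is `X₀` (i.e. agreeing with `a` on `X ∩ X₀`). -/
noncomputable def Sol (X X₀ : Finset V) (a : V → Bool) (φ : Fmla V) :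
    Finset (V → Bool) :=
  Finset.univ.filter fun b =>
    (∀ x, x ∉ X → b x = false) ∧ φ.sat b ∧ ∀ x ∈ X ∩ X₀, b x = a x

/-- `S X X₀ a φ = |Sol X X₀ a φ|`. -/
noncomputable def S (X X₀ : Finset V) (a : V → Bool) (φ : Fmla V) : ℕ :=
  (Sol X X₀ a φ).card

/-- Disjunction of two formulas. -/
def Fmla.or (φ ψ : Fmla V) : Fmla V where
  vars := φ.vars ∪ ψ.vars
  sat b := φ.sat b ∨ ψ.sat b
  localOnly b b' h := by
    have h1 := φ.localOnly b b' fun x hx => h x (Finset.mem_union_left _ hx)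
    have h2 := ψ.localOnly b b' fun x hx => h x (Finset.mem_union_right _ hx)
    tauto

/-- Disjunction of a family of formulas. -/
def Fmla.disj {k : ℕ} (φ : Fin k → Fmla V) : Fmla V where
  vars := Finset.univ.biUnion fun i => (φ i).vars
  sat b := ∃ i, (φ i).sat b
  localOnly b b' h := by
    constructor
    · rintro ⟨i, hi⟩
      exact ⟨i, ((φ i).localOnly b b' fun x hx =>
        h x (Finset.mem_biUnion.2 ⟨i, Finset.mem_univ _, hx⟩)).1 hi⟩
    · rintro ⟨i, hi⟩
      exact ⟨i, ((φ i).localOnly b b' fun x hx =>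
        h x (Finset.mem_biUnion.2 ⟨i, Finset.mem_univ _, hx⟩)).2 hi⟩



/-- Restriction of an assignment to a finite set (false outside). -/
def res (Y : Finset V) (b : V → Bool) : V → Bool := fun x => if x ∈ Y then b x else false

theorem res_mem (Y : Finset V) (b : V → Bool) {x : V} (hx : x ∈ Y) : res Y b x = b x := if_pos hx

theorem res_not_mem (Y : Finset V) (b : V → Bool) {x : V} (hx : x ∉ Y) : res Y b x = false := if_neg hx

open Classical

/-- Counting assignments supported on `Y` that agree with `a` on `Y ∩ W`. -/
theorem agreeCard (Y W : Finset V) (a : V → Bool) :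
    (Finset.univ.filter fun b : V → Bool =>
      (∀ x, x ∉ Y → b x = false) ∧ ∀ x ∈ Y ∩ W, b x = a x).card = 2 ^ (Y \ W).card := by
  classical
  have : ({x // x ∈ Y \ W} → Bool) ≃ {b : V → Bool //
      b ∈ Finset.univ.filter fun b : V → Bool =>
      (∀ x, x ∉ Y → b x = false) ∧ ∀ x ∈ Y ∩ W, b x = a x} := by
    refine ⟨fun g => ⟨fun x => if h : x ∈ Y \ W then g ⟨x, h⟩ else if x ∈ Y ∩ W then a x else false, ?_⟩,
      fun b => fun y => b.1 y, ?_, ?_⟩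
    · simp only [Finset.mem_filter, Finset.mem_univ, true_and]
      constructor
      · intro x hx
        rw [dif_neg (by simp [Finset.mem_sdiff, hx]), if_neg (by simp [Finset.mem_inter, hx])]
      · intro x hx
        rw [dif_neg (by simp only [Finset.mem_sdiff]; simp only [Finset.mem_inter] at hx; tauto),
          if_pos hx]
    · intro g
      funext y
      simp [y.2]
    · intro b
      obtain ⟨hsupp, hagr⟩ := (Finset.mem_filter.1 b.2).2
      apply Subtype.ext
      funext x
      show (if h : x ∈ Y \ W then b.1 x else if x ∈ Y ∩ W then a x else false) = b.1 x
      by_cases h1 : x ∈ Y \ W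
      · rw [dif_pos h1]
      · rw [dif_neg h1]
        by_cases h2 : x ∈ Y ∩ W
        · rw [if_pos h2, hagr x h2]
        · rw [if_neg h2]
          have : x ∉ Y := by
            intro hx
            simp only [Finset.mem_sdiff, Finset.mem_inter, hx, true_and, not_not] at h1 h2
            exact h2 h1
          exact (hsupp x this).symm
  have h2 := Fintype.card_congr this
  simp only [Fintype.card_fun, Fintype.card_coe, Fintype.card_bool, Fintype.card_coe] at h2
  exact h2.symm

/-- Counting assignments over a union of disjoint blocks with independent constraints. -/
theorem prodCard {ι : Type} [Fintype ι] [DecidableEq ι] (Y : ι → Finset V)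
    (hdis : ∀ i j, i ≠ j → Disjoint (Y i) (Y j))
    (T : ι → Finset (V → Bool))
    (hT : ∀ i, ∀ t ∈ T i, ∀ x, x ∉ Y i → t x = false) :
    (Finset.univ.filter fun b : V → Bool =>
      (∀ x, x ∉ Finset.univ.biUnion Y → b x = false) ∧ ∀ i, res (Y i) b ∈ T i).card
      = ∏ i, (T i).card := by
  classical
  rw [← Fintype.card_piFinset T]
  apply Finset.card_nbij' (i := fun b => fun i => res (Y i) b)
    (j := fun f => fun x => if h : ∃ i, x ∈ Y i then f h.choose x else false)
  · intro b hb
    simp only [Finset.mem_coe, Finset.mem_filter, Finset.mem_univ, true_and] at hb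
    simp only [Set.mem_setOf_eq, Finset.mem_coe, Fintype.mem_piFinset]
    exact hb.2
  · intro f hf
    simp only [Finset.mem_coe, Fintype.mem_piFinset] at hf
    have key : ∀ i, res (Y i) (fun x => if h : ∃ i, x ∈ Y i then f h.choose x else false) = f i := by
      intro i
      funext x
      by_cases hx : x ∈ Y i
      · rw [res_mem _ _ hx]
        have hex : ∃ j, x ∈ Y j := ⟨i, hx⟩
        rw [dif_pos hex]
        have : hex.choose = i := by
          by_contra hne
          exact (Finset.disjoint_left.1 (hdis _ _ hne) hex.choose_spec) hx
        rw [this]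
      · rw [res_not_mem _ _ hx, (hT i (f i) (hf i) x hx)]
    simp only [Finset.mem_coe, Finset.mem_filter, Finset.mem_univ, true_and]
    constructor
    · intro x hx
      rw [dif_neg]
      rintro ⟨i, hi⟩
      exact hx (Finset.mem_biUnion.2 ⟨i, Finset.mem_univ _, hi⟩)
    · intro i
      rw [key i]
      exact hf i
  · intro b hb
    simp only [Finset.mem_coe, Finset.mem_filter, Finset.mem_univ, true_and] at hb
    funext x
    beta_reduce
    by_cases hx : ∃ i, x ∈ Y i
    · rw [dif_pos hx]
      exact res_mem _ _ hx.choose_spec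
    · rw [dif_neg hx]
      exact (hb.1 x (fun hm => hx (by
        obtain ⟨i, -, hi⟩ := Finset.mem_biUnion.1 hm
        exact ⟨i, hi⟩))).symm
  · intro f hf
    simp only [Finset.mem_coe, Fintype.mem_piFinset] at hf
    funext i
    funext x
    beta_reduce
    by_cases hx : x ∈ Y i
    · rw [res_mem _ _ hx]
      have hex : ∃ j, x ∈ Y j := ⟨i, hx⟩
      rw [dif_pos hex]
      have : hex.choose = i := by
        by_contra hne
        exact (Finset.disjoint_left.1 (hdis _ _ hne) hex.choose_spec) hx
      rw [this]
    · rw [res_not_mem _ _ hx, (hT i (f i) (hf i) x hx)]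

/-- the number of solutions of a disjunction of formulas with pairwise
disjoint variable sets, relative to a partial assignment `a` on `X₀ ⊆ X`. -/
theorem stmt5 (k : ℕ) (φ : Fin k → Fmla V) (X X₀ : Finset V)
    (hd : ∀ i j : Fin k, i ≠ j → Disjoint (φ i).vars (φ j).vars)
    (hX : ∀ i, (φ i).vars ⊆ X) (hX₀ : X₀ ⊆ X) (a : V → Bool) :
    S X X₀ a (Fmla.disj φ) =
      2 ^ (X \ (X₀ ∪ Finset.univ.biUnion fun i => (φ i).vars)).card *
        ∑ i : Fin k,
          S (φ i).vars (X₀ ∩ (φ i).vars) a (φ i) *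
          (∏ j ∈ Finset.univ.filter (fun j : Fin k => j < i),
            (2 ^ ((φ j).vars \ X₀).card - S (φ j).vars (X₀ ∩ (φ j).vars) a (φ j))) *
          (∏ j ∈ Finset.univ.filter (fun j : Fin k => i < j),
            2 ^ ((φ j).vars \ X₀).card) := by
  classical
  set U : Finset V := Finset.univ.biUnion fun i => (φ i).vars with hUdef
  set F : Finset V := X \ (X₀ ∪ U) with hFdef
  set X₀' : Finset V := X₀ \ U with hX₀'def
  have hsubU : ∀ j : Fin k, (φ j).vars ⊆ U := by
    intro j
    rw [hUdef]
    exact Finset.subset_biUnion_of_mem (fun i => (φ i).vars) (Finset.mem_univ j)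
  -- agreement sets
  set Ag : Fin k → Finset (V → Bool) := (fun j => Finset.univ.filter fun b =>
    (∀ x, x ∉ (φ j).vars → b x = false) ∧ ∀ x ∈ (φ j).vars ∩ X₀, b x = a x) with hAgdef
  have hAgCard : ∀ j, (Ag j).card = 2 ^ ((φ j).vars \ X₀).card := by
    intro j
    simp only [hAgdef]
    exact agreeCard _ _ a
  have hSolEq : ∀ j, Sol (φ j).vars (X₀ ∩ (φ j).vars) a (φ j)
      = (Ag j).filter fun b => (φ j).sat b := by
    intro j
    ext b
    simp only [Sol, hAgdef, Finset.mem_filter, Finset.mem_univ, true_and]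
    have hiff : ∀ x, x ∈ (φ j).vars ∩ (X₀ ∩ (φ j).vars) ↔ x ∈ (φ j).vars ∩ X₀ := by
      intro x; simp only [Finset.mem_inter]; tauto
    constructor
    · rintro ⟨h1, h2, h3⟩
      exact ⟨⟨h1, fun x hx => h3 x ((hiff x).2 hx)⟩, h2⟩
    · rintro ⟨⟨h1, h3⟩, h2⟩
      exact ⟨h1, h2, fun x hx => h3 x ((hiff x).1 hx)⟩
  have hComplCard : ∀ j, ((Ag j).filter fun b => ¬ (φ j).sat b).card
      = 2 ^ ((φ j).vars \ X₀).card - S (φ j).vars (X₀ ∩ (φ j).vars) a (φ j) := by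
    intro j
    have h := Finset.card_filter_add_card_filter_not (s := Ag j)
      (p := fun b => (φ j).sat b)
    have hS : S (φ j).vars (X₀ ∩ (φ j).vars) a (φ j)
        = ((Ag j).filter fun b => (φ j).sat b).card := by rw [S, hSolEq j]
    have h2 := hAgCard j
    omega
  -- blocks
  set Y : (Fin k ⊕ Bool) → Finset V :=
    (Sum.elim (fun j => (φ j).vars) (fun c => cond c F X₀')) with hYdef
  have hYdis : ∀ p q, p ≠ q → Disjoint (Y p) (Y q) := by
    have hvF : ∀ j : Fin k, Disjoint (φ j).vars F :=
      fun j => Finset.disjoint_left.2 fun x hx hx' =>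
        (Finset.mem_sdiff.1 hx').2 (Finset.mem_union_right _ (hsubU j hx))
    have hvX₀' : ∀ j : Fin k, Disjoint (φ j).vars X₀' :=
      fun j => Finset.disjoint_left.2 fun x hx hx' => (Finset.mem_sdiff.1 hx').2 (hsubU j hx)
    have hFX₀' : Disjoint F X₀' :=
      Finset.disjoint_left.2 fun x hx hx' =>
        (Finset.mem_sdiff.1 hx).2 (Finset.mem_union_left _ (Finset.mem_sdiff.1 hx').1)
    rintro (j | c) (j' | c') hne
    · exact hd j j' (fun h => hne (by rw [h]))
    · cases c'
      · exact hvX₀' j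
      · exact hvF j
    · cases c
      · exact (hvX₀' j').symm
      · exact (hvF j').symm
    · cases c <;> cases c'
      · exact absurd rfl hne
      · exact hFX₀'.symm
      · exact hFX₀'
      · exact absurd rfl hne
  have hYunion : Finset.univ.biUnion Y = X := by
    ext x
    simp only [Finset.mem_biUnion, Finset.mem_univ, true_and]
    constructor
    · rintro ⟨(j | c), hx⟩
      · exact hX j hx
      · cases c
        · exact hX₀ (Finset.mem_sdiff.1 hx).1
        · exact (Finset.mem_sdiff.1 hx).1
    · intro hx
      by_cases hu : x ∈ U
      · obtain ⟨j, -, hj⟩ := Finset.mem_biUnion.1 hu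
        exact ⟨Sum.inl j, hj⟩
      · by_cases h0 : x ∈ X₀
        · exact ⟨Sum.inr false, Finset.mem_sdiff.2 ⟨h0, hu⟩⟩
        · refine ⟨Sum.inr true, Finset.mem_sdiff.2 ⟨hx, ?_⟩⟩
          simp only [Finset.mem_union, not_or]
          exact ⟨h0, hu⟩
  -- decomposition by least satisfied index
  set D : Finset (V → Bool) := Sol X X₀ a (Fmla.disj φ) with hDdef
  set M : Fin k → Finset (V → Bool) := (fun i => D.filter fun b =>
    (φ i).sat b ∧ ∀ j < i, ¬ (φ j).sat b) with hMdef
  have hcover : D = Finset.univ.biUnion M := by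
    ext b
    simp only [hMdef, Finset.mem_biUnion, Finset.mem_univ, true_and, Finset.mem_filter]
    constructor
    · intro hb
      have hsat : ∃ ℓ, (φ ℓ).sat b := (Finset.mem_filter.1 hb).2.2.1
      obtain ⟨ℓ, hℓ⟩ := hsat
      have hne : (Finset.univ.filter fun m : Fin k => (φ m).sat b).Nonempty :=
        ⟨ℓ, Finset.mem_filter.2 ⟨Finset.mem_univ _, hℓ⟩⟩
      obtain ⟨i, hi, hmin⟩ := Finset.exists_min_image _ id hne
      refine ⟨i, hb, (Finset.mem_filter.1 hi).2, fun j hj hsatj => ?_⟩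
      exact absurd (hmin j (Finset.mem_filter.2 ⟨Finset.mem_univ _, hsatj⟩)) (not_le.2 hj)
    · rintro ⟨i, hb, -⟩
      exact hb
  have hMdisj : ∀ i ∈ (Finset.univ : Finset (Fin k)), ∀ j ∈ (Finset.univ : Finset (Fin k)),
      i ≠ j → Disjoint (M i) (M j) := by
    rintro i - j - hne
    rcases lt_or_gt_of_ne hne with h | h
    · exact Finset.disjoint_left.2 fun b hbi hbj =>
        (Finset.mem_filter.1 hbj).2.2 i h (Finset.mem_filter.1 hbi).2.1
    · exact Finset.disjoint_left.2 fun b hbi hbj =>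
        (Finset.mem_filter.1 hbi).2.2 j h (Finset.mem_filter.1 hbj).2.1
  have hres_sat : ∀ (j : Fin k) (b : V → Bool),
      ((φ j).sat (res (φ j).vars b) ↔ (φ j).sat b) :=
    fun j b => (φ j).localOnly _ _ (fun x hx => res_mem _ _ hx)
  -- cardinality of each fiber
  have hMcard : ∀ i : Fin k, (M i).card = 2 ^ F.card *
      (S (φ i).vars (X₀ ∩ (φ i).vars) a (φ i) *
        (∏ j ∈ Finset.univ.filter (fun j : Fin k => j < i),
          (2 ^ ((φ j).vars \ X₀).card - S (φ j).vars (X₀ ∩ (φ j).vars) a (φ j))) *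
        (∏ j ∈ Finset.univ.filter (fun j : Fin k => i < j),
          2 ^ ((φ j).vars \ X₀).card)) := by
    intro i
    set TL : Fin k → Finset (V → Bool) := (fun j =>
      if j < i then (Ag j).filter (fun b => ¬ (φ j).sat b)
      else if j = i then (Ag j).filter (fun b => (φ j).sat b)
      else Ag j) with hTLdef
    have hTLsub : ∀ j, TL j ⊆ Ag j := by
      intro j
      rw [hTLdef]
      dsimp only
      split_ifs
      · exact Finset.filter_subset _ _
      · exact Finset.filter_subset _ _
      · exact subset_rfl
    set TF : Finset (V → Bool) := (Finset.univ.filter fun b : V → Bool =>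
      (∀ x, x ∉ F → b x = false) ∧ ∀ x ∈ F ∩ (∅ : Finset V), b x = a x) with hTFdef
    set T : (Fin k ⊕ Bool) → Finset (V → Bool) :=
      (Sum.elim TL (fun c => cond c TF {res X₀' a})) with hTdef
    have hTsup : ∀ p, ∀ t ∈ T p, ∀ x, x ∉ Y p → t x = false := by
      rintro (j | c) t ht x hx
      · have := (Finset.mem_filter.1 (hTLsub j ht)).2.1
        exact this x hx
      · cases c
        · have : t = res X₀' a := Finset.mem_singleton.1 ht
          rw [this]
          exact res_not_mem _ _ hx
        · exact (Finset.mem_filter.1 ht).2.1 x hx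
    -- the fiber equals the product-set
    have hMeq : M i = Finset.univ.filter fun b : V → Bool =>
        (∀ x, x ∉ Finset.univ.biUnion Y → b x = false) ∧ ∀ p, res (Y p) b ∈ T p := by
      ext b
      simp only [hMdef, Finset.mem_filter, Finset.mem_univ, true_and, hDdef, Sol]
      rw [hYunion]
      constructor
      · rintro ⟨⟨hsupp, hsat, hagr⟩, hsi, hmin⟩
        refine ⟨hsupp, ?_⟩
        have hagr' : ∀ j : Fin k, ∀ x ∈ (φ j).vars ∩ X₀, b x = a x := by
          intro j x hx
          obtain ⟨h1, h2⟩ := Finset.mem_inter.1 hx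
          exact hagr x (Finset.mem_inter.2 ⟨hX j h1, h2⟩)
        have hmemAg : ∀ j : Fin k, res (φ j).vars b ∈ Ag j := by
          intro j
          rw [hAgdef]
          refine Finset.mem_filter.2 ⟨Finset.mem_univ _, fun x hx => res_not_mem _ _ hx,
            fun x hx => ?_⟩
          rw [res_mem _ _ (Finset.mem_inter.1 hx).1]
          exact hagr' j x hx
        rintro (j | c)
        · simp only [hTdef, hYdef, Sum.elim_inl, hTLdef]
          by_cases hlt : j < i
          · rw [if_pos hlt]
            refine Finset.mem_filter.2 ⟨hmemAg j, ?_⟩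
            rw [hres_sat]
            exact hmin j hlt
          · rw [if_neg hlt]
            by_cases heq : j = i
            · rw [if_pos heq]
              refine Finset.mem_filter.2 ⟨hmemAg j, ?_⟩
              rw [hres_sat, heq]
              exact hsi
            · rw [if_neg heq]
              exact hmemAg j
        · cases c
          · simp only [hTdef, hYdef, Sum.elim_inr, cond_false, Finset.mem_singleton]
            funext x
            by_cases hx : x ∈ X₀'
            · rw [res_mem _ _ hx, res_mem _ _ hx]
              have hx0 : x ∈ X₀ := (Finset.mem_sdiff.1 hx).1
              exact hagr x (Finset.mem_inter.2 ⟨hX₀ hx0, hx0⟩)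
            · rw [res_not_mem _ _ hx, res_not_mem _ _ hx]
          · simp only [hTdef, hYdef, Sum.elim_inr, cond_true, hTFdef]
            refine Finset.mem_filter.2 ⟨Finset.mem_univ _, fun x hx => res_not_mem _ _ hx,
              fun x hx => ?_⟩
            rw [Finset.inter_empty] at hx
            exact absurd hx (Finset.notMem_empty x)
      · rintro ⟨hsupp, hall⟩
        have hj : ∀ j : Fin k, res (φ j).vars b ∈ TL j := fun j => by
          have := hall (Sum.inl j)
          rwa [hTdef, hYdef] at this
        have hagr' : ∀ j : Fin k, ∀ x ∈ (φ j).vars ∩ X₀, b x = a x := by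
          intro j x hx
          have hAgmem := hTLsub j (hj j)
          rw [hAgdef] at hAgmem
          have := (Finset.mem_filter.1 hAgmem).2.2 x hx
          rwa [res_mem _ _ (Finset.mem_inter.1 hx).1] at this
        have hsi : (φ i).sat b := by
          have := hj i
          rw [hTLdef] at this
          dsimp only at this
          rw [if_neg (lt_irrefl i), if_pos rfl] at this
          have := (Finset.mem_filter.1 this).2
          rwa [hres_sat] at this
        have hmin : ∀ j < i, ¬ (φ j).sat b := by
          intro j hlt
          have := hj j
          simp only [hTLdef] at this
          rw [if_pos hlt] at this
          have := (Finset.mem_filter.1 this).2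
          rwa [hres_sat] at this
        refine ⟨⟨hsupp, ⟨i, hsi⟩, ?_⟩, hsi, hmin⟩
        intro x hx
        obtain ⟨hxX, hx0⟩ := Finset.mem_inter.1 hx
        by_cases hu : x ∈ U
        · obtain ⟨j, -, hjv⟩ := Finset.mem_biUnion.1 hu
          exact hagr' j x (Finset.mem_inter.2 ⟨hjv, hx0⟩)
        · have h0 := hall (Sum.inr false)
          rw [hTdef, hYdef] at h0
          simp only [Sum.elim_inr, cond_false, Finset.mem_singleton] at h0
          have hx' : x ∈ X₀' := Finset.mem_sdiff.2 ⟨hx0, hu⟩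
          have := congrFun h0 x
          rwa [res_mem _ _ hx', res_mem _ _ hx'] at this
    -- compute the cardinality
    have hsplit : ∀ g : Fin k → ℕ,
        (∏ j, g j) = g i * ((∏ j ∈ Finset.univ.filter (fun j : Fin k => j < i), g j) *
          (∏ j ∈ Finset.univ.filter (fun j : Fin k => i < j), g j)) := by
      intro g
      rw [← Finset.prod_filter_mul_prod_filter_not Finset.univ (fun j : Fin k => j < i) g]
      have hins : Finset.univ.filter (fun j : Fin k => ¬ j < i) =
          insert i (Finset.univ.filter (fun j : Fin k => i < j)) := by
        ext j
        simp only [Finset.mem_filter, Finset.mem_univ, true_and, Finset.mem_insert, not_lt]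
        constructor
        · intro h
          rcases eq_or_lt_of_le h with h | h
          · exact Or.inl h.symm
          · exact Or.inr h
        · rintro (rfl | h)
          · exact le_refl _
          · exact le_of_lt h
      rw [hins, Finset.prod_insert (by simp)]
      ring
    rw [hMeq, prodCard Y hYdis T hTsup, Fintype.prod_sum_type]
    have hbool : (∏ c : Bool, (T (Sum.inr c)).card) = 2 ^ F.card := by
      rw [Fintype.prod_bool]
      have ht : (T (Sum.inr true)).card = 2 ^ F.card := by
        rw [hTdef]
        simp only [Sum.elim_inr, cond_true]
        rw [hTFdef, agreeCard F ∅ a, Finset.sdiff_empty]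
      have hf : (T (Sum.inr false)).card = 1 := by
        rw [hTdef]
        simp only [Sum.elim_inr, cond_false]
        exact Finset.card_singleton _
      rw [ht, hf, mul_one]
    have hfin : (∏ j : Fin k, (T (Sum.inl j)).card) =
        S (φ i).vars (X₀ ∩ (φ i).vars) a (φ i) *
        (∏ j ∈ Finset.univ.filter (fun j : Fin k => j < i),
          (2 ^ ((φ j).vars \ X₀).card - S (φ j).vars (X₀ ∩ (φ j).vars) a (φ j))) *
        (∏ j ∈ Finset.univ.filter (fun j : Fin k => i < j),
          2 ^ ((φ j).vars \ X₀).card) := by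
      have hTL : ∀ j, T (Sum.inl j) = TL j := fun j => by simp only [hTdef, Sum.elim_inl]
      simp only [hTL]
      rw [hsplit (fun j => (TL j).card)]
      have hi : (TL i).card = S (φ i).vars (X₀ ∩ (φ i).vars) a (φ i) := by
        rw [hTLdef]
        dsimp only
        rw [if_neg (lt_irrefl i), if_pos rfl]
        rw [S, hSolEq i]
      have hlt : ∀ j ∈ Finset.univ.filter (fun j : Fin k => j < i), (TL j).card =
          2 ^ ((φ j).vars \ X₀).card - S (φ j).vars (X₀ ∩ (φ j).vars) a (φ j) := by
        intro j hjm
        have hjlt : j < i := (Finset.mem_filter.1 hjm).2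
        rw [hTLdef]
        simp only [if_pos hjlt]
        exact hComplCard j
      have hgt : ∀ j ∈ Finset.univ.filter (fun j : Fin k => i < j), (TL j).card =
          2 ^ ((φ j).vars \ X₀).card := by
        intro j hjm
        have hjgt : i < j := (Finset.mem_filter.1 hjm).2
        rw [hTLdef]
        simp only [if_neg (not_lt.2 (le_of_lt hjgt)), if_neg (ne_of_gt hjgt)]
        exact hAgCard j
      rw [hi, Finset.prod_congr rfl hlt, Finset.prod_congr rfl hgt]
      ring
    rw [hbool, hfin]
    ring
  -- put it all together
  have hgoal : S X X₀ a (Fmla.disj φ) = D.card := rfl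
  rw [hgoal, hcover, Finset.card_biUnion hMdisj]
  calc (∑ i, (M i).card)
      = ∑ i : Fin k, 2 ^ F.card *
        (S (φ i).vars (X₀ ∩ (φ i).vars) a (φ i) *
          (∏ j ∈ Finset.univ.filter (fun j : Fin k => j < i),
            (2 ^ ((φ j).vars \ X₀).card - S (φ j).vars (X₀ ∩ (φ j).vars) a (φ j))) *
          (∏ j ∈ Finset.univ.filter (fun j : Fin k => i < j),
            2 ^ ((φ j).vars \ X₀).card)) := Finset.sum_congr rfl fun i _ => hMcard i
    _ = _ := by rw [← Finset.mul_sum]
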